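/- Let ψ ∈ L²(ℝ), ψ ≠ 0, and N ∈ ℕ, N > 1. Let ⟨ψ⟩_ℤ denote the closed linear span of {T_k ψ : k ∈ ℤ} in L²(ℝ), where T_h f(y) = f(y−h). Then ⟨ψ⟩_ℤ is invariant under all translations T_{k/N}, k ∈ ℤ, if and only if T_{1/N}ψ ∈ ⟨ψ⟩_ℤ. -/

import Mathlib

open MeasureTheory Complex

open scoped ENNReal NNReal

/-- `g` belongs to the closed linear span in `L²(ℝ)` of the translates `{T_h ψ : h ∈ S}`:
it can be approximated in `L²` norm by finite linear combinations of such translates. -/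
def memPrincipal (ψ : ℝ → ℂ) (S : Set ℝ) (g : ℝ → ℂ) : Prop :=
  ∀ ε : ℝ, 0 < ε → ∃ (F : Finset ℝ) (c : ℝ → ℂ), (↑F : Set ℝ) ⊆ S ∧
    eLpNorm (fun y => g y - ∑ h ∈ F, c h * ψ (y - h)) 2 volume < ENNReal.ofReal ε

/-- The set `ℤ ⊆ ℝ` of integer translations. -/
def intTranslations : Set ℝ := Set.range (fun k : ℤ => (k : ℝ))

private lemma lintegral_rpow_two_add_le {α : Type*} [MeasurableSpace α] {μ : Measure α}
    (A M : α → ℝ≥0∞) (hM : Measurable M) :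
    (∫⁻ y, (A y + M y) ^ (2:ℝ) ∂μ) ^ (1/2:ℝ) ≤
      (∫⁻ y, A y ^ (2:ℝ) ∂μ) ^ (1/2:ℝ) + (∫⁻ y, M y ^ (2:ℝ) ∂μ) ^ (1/2:ℝ) := by
  obtain ⟨φ, hφm, hφle, hφeq⟩ :=
    exists_measurable_le_lintegral_eq μ (fun y => (A y + M y) ^ (2:ℝ))
  set D : α → ℝ≥0∞ := fun y => φ y ^ (1/2:ℝ) - M y with hDdef
  have hsq : ∀ y, φ y ^ (1/2:ℝ) ≤ A y + M y := by
    intro y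
    calc φ y ^ (1/2:ℝ) ≤ ((A y + M y) ^ (2:ℝ)) ^ (1/2:ℝ) :=
          ENNReal.rpow_le_rpow (hφle y) (by norm_num)
      _ = A y + M y := by rw [← ENNReal.rpow_mul]; norm_num
  have hDA : ∀ y, D y ≤ A y := fun y => tsub_le_iff_right.2 (hsq y)
  have hDM : ∀ y, φ y ≤ (D y + M y) ^ (2:ℝ) := by
    intro y
    have h1 : φ y ^ (1/2:ℝ) ≤ D y + M y := le_tsub_add
    calc φ y = (φ y ^ (1/2:ℝ)) ^ (2:ℝ) := by rw [← ENNReal.rpow_mul]; norm_num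
      _ ≤ (D y + M y) ^ (2:ℝ) := ENNReal.rpow_le_rpow h1 (by norm_num)
  have hDmeas : Measurable D := (hφm.pow_const _).sub hM
  calc (∫⁻ y, (A y + M y) ^ (2:ℝ) ∂μ) ^ (1/2:ℝ)
      = (∫⁻ y, φ y ∂μ) ^ (1/2:ℝ) := by rw [hφeq]
    _ ≤ (∫⁻ y, (D y + M y) ^ (2:ℝ) ∂μ) ^ (1/2:ℝ) := by
        exact ENNReal.rpow_le_rpow (lintegral_mono fun y => hDM y) (by norm_num)
    _ ≤ (∫⁻ y, D y ^ (2:ℝ) ∂μ) ^ (1/2:ℝ) + (∫⁻ y, M y ^ (2:ℝ) ∂μ) ^ (1/2:ℝ) :=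
        ENNReal.lintegral_Lp_add_le hDmeas.aemeasurable hM.aemeasurable (by norm_num)
    _ ≤ (∫⁻ y, A y ^ (2:ℝ) ∂μ) ^ (1/2:ℝ) + (∫⁻ y, M y ^ (2:ℝ) ∂μ) ^ (1/2:ℝ) := by
        refine add_le_add_left ?_ _
        exact ENNReal.rpow_le_rpow
          (lintegral_mono fun y => ENNReal.rpow_le_rpow (hDA y) (by norm_num)) (by norm_num)


private lemma eLpNorm_two_eq (f : ℝ → ℂ) :
    eLpNorm f 2 volume = (∫⁻ y, (‖f y‖₊ : ℝ≥0∞) ^ (2:ℝ)) ^ (1/2:ℝ) := by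
  rw [eLpNorm_eq_lintegral_rpow_enorm_toReal (by norm_num) (by norm_num)]
  norm_num [enorm_eq_nnnorm]

/-- One-sided triangle inequality: valid for arbitrary `u` provided `m` is a.e. strongly
measurable. -/
private lemma eLpNorm_add_le_right (u m : ℝ → ℂ) (hm : AEStronglyMeasurable m volume) :
    eLpNorm (fun y => u y + m y) 2 volume ≤ eLpNorm u 2 volume + eLpNorm m 2 volume := by
  obtain ⟨m', hm'meas, hm'ae⟩ := hm
  have h1 : eLpNorm (fun y => u y + m y) 2 volume = eLpNorm (fun y => u y + m' y) 2 volume :=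
    eLpNorm_congr_ae (hm'ae.mono fun y hy => by simp [hy])
  have h2 : eLpNorm m 2 volume = eLpNorm m' 2 volume := eLpNorm_congr_ae hm'ae
  rw [h1, h2, eLpNorm_two_eq, eLpNorm_two_eq, eLpNorm_two_eq]
  have key := lintegral_rpow_two_add_le (μ := volume) (fun y => (‖u y‖₊ : ℝ≥0∞))
    (fun y => (‖m' y‖₊ : ℝ≥0∞)) hm'meas.measurable.nnnorm.coe_nnreal_ennreal
  refine le_trans ?_ key
  refine ENNReal.rpow_le_rpow (lintegral_mono fun y => ?_) (by norm_num)
  refine ENNReal.rpow_le_rpow ?_ (by norm_num)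
  exact_mod_cast nnnorm_add_le (u y) (m' y)

/-- Translation invariance of the `L²` seminorm (no measurability needed). -/
private lemma eLpNorm_translate (f : ℝ → ℂ) (a : ℝ) :
    eLpNorm (fun y => f (y - a)) 2 volume = eLpNorm f 2 volume := by
  rw [eLpNorm_two_eq, eLpNorm_two_eq]
  congr 1
  exact lintegral_sub_right_eq_self (fun y => (‖f y‖₊ : ℝ≥0∞) ^ (2:ℝ)) a

private lemma aesm_translate {f : ℝ → ℂ} (hf : AEStronglyMeasurable f volume) (a : ℝ) :
    AEStronglyMeasurable (fun y => f (y - a)) volume :=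
  hf.comp_measurePreserving (measurePreserving_sub_right volume a)

private lemma aesm_combo {q : ℝ → ℂ} (hq : AEStronglyMeasurable q volume)
    (F : Finset ℝ) (c : ℝ → ℂ) :
    AEStronglyMeasurable (fun y => ∑ h ∈ F, c h * q (y - h)) volume := by
  exact Finset.aestronglyMeasurable_fun_sum F
    (fun h _ => (aesm_translate hq h).const_mul (c h))
private lemma half_add_half_lt {a b : ℝ≥0∞} {ε : ℝ} (hε : 0 < ε)
    (ha : a < ENNReal.ofReal (ε/2)) (hb : b < ENNReal.ofReal (ε/2)) :
    a + b < ENNReal.ofReal ε := by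
  have := ENNReal.add_lt_add ha hb
  rwa [← ENNReal.ofReal_add (by linarith) (by linarith), add_halves] at this

private lemma memPrincipal_self (ψ : ℝ → ℂ) {S : Set ℝ} (h0 : (0:ℝ) ∈ S) :
    memPrincipal ψ S ψ := by
  intro ε hε
  refine ⟨{0}, fun _ => 1, by simpa using h0, ?_⟩
  simp only [Finset.sum_singleton, one_mul, sub_zero, sub_self]
  simpa [eLpNorm_zero'] using ENNReal.ofReal_pos.2 hε

private lemma zero_mem_intTranslations : (0:ℝ) ∈ intTranslations := ⟨0, by simp⟩

private lemma memPrincipal_zero (ψ : ℝ → ℂ) (S : Set ℝ) :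
    memPrincipal ψ S (fun _ => 0) := by
  intro ε hε
  refine ⟨∅, fun _ => 0, by simp, ?_⟩
  simpa [eLpNorm_zero'] using ENNReal.ofReal_pos.2 hε

private lemma memPrincipal_of_approx {ψ : ℝ → ℂ} (hψ : AEStronglyMeasurable ψ volume)
    {S : Set ℝ} {g : ℝ → ℂ}
    (H : ∀ ε : ℝ, 0 < ε → ∃ t : ℝ → ℂ, AEStronglyMeasurable t volume ∧ memPrincipal ψ S t ∧
      eLpNorm (fun y => g y - t y) 2 volume < ENNReal.ofReal ε) :
    memPrincipal ψ S g := by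
  intro ε hε
  obtain ⟨t, htm, htp, hlt⟩ := H (ε/2) (by linarith)
  obtain ⟨F, c, hF, hs⟩ := htp (ε/2) (by linarith)
  refine ⟨F, c, hF, ?_⟩
  have h1 : (fun y => g y - ∑ h ∈ F, c h * ψ (y - h)) =
      fun y => (g y - t y) + (t y - ∑ h ∈ F, c h * ψ (y - h)) := by funext y; ring
  rw [h1]
  calc eLpNorm (fun y => (g y - t y) + (t y - ∑ h ∈ F, c h * ψ (y - h))) 2 volume
      ≤ eLpNorm (fun y => g y - t y) 2 volume +
        eLpNorm (fun y => t y - ∑ h ∈ F, c h * ψ (y - h)) 2 volume :=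
        eLpNorm_add_le_right _ _ (htm.sub (aesm_combo hψ F c))
    _ < ENNReal.ofReal ε := half_add_half_lt hε hlt hs

private lemma memPrincipal_add {ψ : ℝ → ℂ} (hψ : AEStronglyMeasurable ψ volume) {S : Set ℝ}
    {g₁ g₂ : ℝ → ℂ} (h1 : memPrincipal ψ S g₁) (h2 : memPrincipal ψ S g₂)
    (hm2 : AEStronglyMeasurable g₂ volume) :
    memPrincipal ψ S (fun y => g₁ y + g₂ y) := by
  classical
  intro ε hε
  obtain ⟨F₁, c₁, hF₁, hs₁⟩ := h1 (ε/2) (by linarith)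
  obtain ⟨F₂, c₂, hF₂, hs₂⟩ := h2 (ε/2) (by linarith)
  refine ⟨F₁ ∪ F₂,
    fun h => (if h ∈ F₁ then c₁ h else 0) + (if h ∈ F₂ then c₂ h else 0), ?_, ?_⟩
  · rw [Finset.coe_union]; exact Set.union_subset hF₁ hF₂
  · have hsum : ∀ y : ℝ,
        (∑ h ∈ F₁ ∪ F₂,
          ((if h ∈ F₁ then c₁ h else 0) + (if h ∈ F₂ then c₂ h else 0)) * ψ (y - h)) =
        (∑ h ∈ F₁, c₁ h * ψ (y - h)) + (∑ h ∈ F₂, c₂ h * ψ (y - h)) := by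
      intro y
      rw [Finset.sum_congr rfl (fun h _ => add_mul _ _ _), Finset.sum_add_distrib]
      congr 1
      · rw [Finset.sum_congr rfl (fun h _ => ite_mul (h ∈ F₁) (c₁ h) 0 (ψ (y - h))),
          Finset.sum_congr rfl (fun h _ => by rw [zero_mul]),
          Finset.sum_ite_mem, Finset.union_inter_cancel_left]
      · rw [Finset.sum_congr rfl (fun h _ => ite_mul (h ∈ F₂) (c₂ h) 0 (ψ (y - h))),
          Finset.sum_congr rfl (fun h _ => by rw [zero_mul]),
          Finset.sum_ite_mem, Finset.union_inter_cancel_right]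
    have hdiff : (fun y => (g₁ y + g₂ y) - ∑ h ∈ F₁ ∪ F₂,
          ((if h ∈ F₁ then c₁ h else 0) + (if h ∈ F₂ then c₂ h else 0)) * ψ (y - h)) =
        fun y => (g₁ y - ∑ h ∈ F₁, c₁ h * ψ (y - h)) +
          (g₂ y - ∑ h ∈ F₂, c₂ h * ψ (y - h)) := by
      funext y; rw [hsum]; ring
    rw [hdiff]
    calc eLpNorm (fun y => (g₁ y - ∑ h ∈ F₁, c₁ h * ψ (y - h)) +
          (g₂ y - ∑ h ∈ F₂, c₂ h * ψ (y - h))) 2 volume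
        ≤ eLpNorm (fun y => g₁ y - ∑ h ∈ F₁, c₁ h * ψ (y - h)) 2 volume +
          eLpNorm (fun y => g₂ y - ∑ h ∈ F₂, c₂ h * ψ (y - h)) 2 volume :=
          eLpNorm_add_le_right _ _ (hm2.sub (aesm_combo hψ F₂ c₂))
      _ < ENNReal.ofReal ε := half_add_half_lt hε hs₁ hs₂
private lemma memPrincipal_const_mul {ψ : ℝ → ℂ} {S : Set ℝ} {g : ℝ → ℂ}
    (h : memPrincipal ψ S g) (b : ℂ) :
    memPrincipal ψ S (fun y => b * g y) := by
  intro ε hε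
  have hb : (0:ℝ) < ε / (‖b‖ + 1) := div_pos hε (by positivity)
  obtain ⟨F, c, hF, hs⟩ := h _ hb
  refine ⟨F, fun h => b * c h, hF, ?_⟩
  have hdiff : (fun y => b * g y - ∑ h ∈ F, (b * c h) * ψ (y - h)) =
      b • fun y => g y - ∑ h ∈ F, c h * ψ (y - h) := by
    funext y
    simp only [Pi.smul_apply, smul_eq_mul, Finset.mul_sum, mul_sub]
    congr 1
    exact Finset.sum_congr rfl fun h _ => by ring
  rw [hdiff, eLpNorm_const_smul]
  calc (‖b‖₊ : ℝ≥0∞) * eLpNorm (fun y => g y - ∑ h ∈ F, c h * ψ (y - h)) 2 volume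
      ≤ (‖b‖₊ : ℝ≥0∞) * ENNReal.ofReal (ε / (‖b‖ + 1)) := by
        exact mul_le_mul_right hs.le _
    _ < ENNReal.ofReal ε := by
        rw [← ENNReal.ofReal_coe_nnreal, ← ENNReal.ofReal_mul (by positivity)]
        refine ENNReal.ofReal_lt_ofReal_iff hε |>.2 ?_
        have hbn : (‖b‖₊ : ℝ) = ‖b‖ := rfl
        rw [hbn, mul_comm, div_mul_eq_mul_div, div_lt_iff₀ (by positivity)]
        nlinarith [norm_nonneg b]

private lemma memPrincipal_int_translate {ψ g : ℝ → ℂ}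
    (h : memPrincipal ψ intTranslations g) (j : ℤ) :
    memPrincipal ψ intTranslations (fun y => g (y - (j:ℝ))) := by
  classical
  intro ε hε
  obtain ⟨F, c, hF, hs⟩ := h ε hε
  have hinj : ∀ x ∈ F, ∀ y ∈ F, x + (j:ℝ) = y + (j:ℝ) → x = y := fun x _ y _ hxy => by
    linarith
  refine ⟨F.image (fun h => h + (j:ℝ)), fun h => c (h - j), ?_, ?_⟩
  · intro x hx
    simp only [Finset.coe_image, Set.mem_image, Finset.mem_coe] at hx
    obtain ⟨h, hh, rfl⟩ := hx
    obtain ⟨m, hm⟩ := hF hh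
    exact ⟨m + j, by push_cast [← hm]; ring⟩
  · have hdiff : (fun y => g (y - (j:ℝ)) -
        ∑ h ∈ F.image (fun h => h + (j:ℝ)), c (h - (j:ℝ)) * ψ (y - h)) =
        fun y => (fun z => g z - ∑ h ∈ F, c h * ψ (z - h)) (y - (j:ℝ)) := by
      funext y
      rw [Finset.sum_image hinj]
      simp only [add_sub_cancel_right]
      congr 1
      exact Finset.sum_congr rfl fun h _ => by ring_nf
    rw [hdiff]
    have heq := eLpNorm_translate (fun z => g z - ∑ h ∈ F, c h * ψ (z - h)) (j:ℝ)
    rw [heq]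
    exact hs

private lemma memPrincipal_combo {ψ q : ℝ → ℂ} (hψ : AEStronglyMeasurable ψ volume)
    (hq : AEStronglyMeasurable q volume) (hqm : memPrincipal ψ intTranslations q)
    (F : Finset ℝ) (c : ℝ → ℂ) :
    (↑F : Set ℝ) ⊆ intTranslations →
    memPrincipal ψ intTranslations (fun y => ∑ h ∈ F, c h * q (y - h)) := by
  classical
  induction F using Finset.induction_on with
  | empty =>
    intro _
    simpa using memPrincipal_zero ψ intTranslations
  | @insert a F ha ih =>
    intro hF
    have haS : (a:ℝ) ∈ intTranslations := hF (by simp)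
    obtain ⟨j, hj⟩ := haS
    have hFS : (↑F : Set ℝ) ⊆ intTranslations := by
      refine subset_trans ?_ hF
      intro x hx; simp only [Finset.coe_insert, Set.mem_insert_iff]; right; exact hx
    have h1 : memPrincipal ψ intTranslations (fun y => c a * q (y - a)) := by
      have := memPrincipal_const_mul (memPrincipal_int_translate hqm j) (c a)
      simpa [hj] using this
    have h2 := ih hFS
    have := memPrincipal_add hψ h1 h2 (aesm_combo hq F c)
    have hins : (fun y => ∑ h ∈ insert a F, c h * q (y - h)) =
        fun y => c a * q (y - a) + ∑ h ∈ F, c h * q (y - h) := by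
      funext y; rw [Finset.sum_insert ha]
    rw [hins]
    exact this
private lemma memPrincipal_translate_step {ψ : ℝ → ℂ} (hψ : AEStronglyMeasurable ψ volume)
    {a : ℝ} (hT : memPrincipal ψ intTranslations (fun y => ψ (y - a)))
    {g : ℝ → ℂ} (hg : memPrincipal ψ intTranslations g) :
    memPrincipal ψ intTranslations (fun y => g (y - a)) := by
  apply memPrincipal_of_approx hψ
  intro ε hε
  obtain ⟨F, c, hF, hs⟩ := hg ε hε
  refine ⟨fun y => ∑ h ∈ F, c h * ψ (y - a - h), ?_, ?_, ?_⟩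
  · have : (fun y => ∑ h ∈ F, c h * ψ (y - a - h)) =
        fun y => (fun z => ∑ h ∈ F, c h * ψ (z - h)) (y - a) := by
      funext y
      exact Finset.sum_congr rfl fun h _ => by ring_nf
    rw [this]
    exact aesm_translate (aesm_combo hψ F c) a
  · have : (fun y => ∑ h ∈ F, c h * ψ (y - a - h)) =
        fun y => ∑ h ∈ F, c h * (fun z => ψ (z - a)) (y - h) := by
      funext y
      exact Finset.sum_congr rfl fun h _ => by simp only []; ring_nf
    rw [this]
    exact memPrincipal_combo hψ (aesm_translate hψ a) hT F c hF
  · have hdiff : (fun y => g (y - a) - ∑ h ∈ F, c h * ψ (y - a - h)) =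
        fun y => (fun z => g z - ∑ h ∈ F, c h * ψ (z - h)) (y - a) := by
      funext y
      simp only []
    have heq := eLpNorm_translate (fun z => g z - ∑ h ∈ F, c h * ψ (z - h)) a
    rw [hdiff, heq]
    exact hs

private lemma memPrincipal_translate_iter {ψ : ℝ → ℂ} (hψ : AEStronglyMeasurable ψ volume)
    {a : ℝ} (hT : memPrincipal ψ intTranslations (fun y => ψ (y - a))) :
    ∀ n : ℕ, ∀ g : ℝ → ℂ, memPrincipal ψ intTranslations g →
      memPrincipal ψ intTranslations (fun y => g (y - n * a)) := by
  intro n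
  induction n with
  | zero => intro g hg; simpa using hg
  | succ n ih =>
    intro g hg
    have h1 := memPrincipal_translate_step hψ hT (ih g hg)
    have heq : (fun y => g (y - ((n:ℕ)+1 : ℕ) * a)) =
        fun y => (fun z => g (z - n * a)) (y - a) := by
      funext y; congr 1; push_cast; ring
    rw [heq]
    exact h1
theorem invariance_iff_translate_mem (ψ : ℝ → ℂ) (hψ : MemLp ψ 2 volume)
    (hψ0 : ¬ ψ =ᵐ[volume] 0) (N : ℕ) (hN : 1 < N) :
    (∀ g : ℝ → ℂ, memPrincipal ψ intTranslations g →
        ∀ k : ℤ, memPrincipal ψ intTranslations (fun y => g (y - (k : ℝ) / N)))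
    ↔ memPrincipal ψ intTranslations (fun y => ψ (y - 1 / N)) := by
  have hψm := hψ.1
  have hself := memPrincipal_self ψ zero_mem_intTranslations
  constructor
  · intro H
    have := H ψ hself 1
    simpa using this
  · intro hT g hg k
    have hN0 : (N:ℝ) ≠ 0 := by
      have : (0:ℝ) < N := by exact_mod_cast Nat.zero_lt_of_lt hN
      linarith
    have Qpos := memPrincipal_translate_iter hψm (a := 1/(N:ℝ)) hT
    have hT1 : memPrincipal ψ intTranslations
        (fun y => ψ (y - ((N-1:ℕ):ℝ) * (1/(N:ℝ)))) := Qpos (N-1) ψ hself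
    have hTneg : memPrincipal ψ intTranslations (fun y => ψ (y - (-(1/(N:ℝ))))) := by
      have h2 := memPrincipal_int_translate hT1 (-1)
      have heq : (fun y => (fun y => ψ (y - ((N-1:ℕ):ℝ) * (1/(N:ℝ)))) (y - ((-1:ℤ):ℝ))) =
          fun y => ψ (y - (-(1/(N:ℝ)))) := by
        funext y
        congr 1
        have hc : ((N-1:ℕ):ℝ) = (N:ℝ) - 1 := by
          push_cast [Nat.cast_sub hN.le]; ring
        rw [hc]
        push_cast
        field_simp
        ring
      rw [heq] at h2
      exact h2
    have Qneg := memPrincipal_translate_iter hψm (a := -(1/(N:ℝ))) hTneg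
    rcases le_or_gt 0 k with hk | hk
    · have h3 := Qpos k.toNat g hg
      have heq : (fun y => g (y - (k:ℝ)/(N:ℝ))) =
          fun y => g (y - (k.toNat : ℕ) * (1/(N:ℝ))) := by
        funext y
        congr 1
        have hc : ((k.toNat : ℕ) : ℝ) = (k : ℝ) := by
          exact_mod_cast congrArg (fun z : ℤ => (z:ℝ)) (Int.toNat_of_nonneg hk)
        rw [hc]; ring
      rw [heq]; exact h3
    · have h3 := Qneg (-k).toNat g hg
      have heq : (fun y => g (y - (k:ℝ)/(N:ℝ))) =
          fun y => g (y - ((-k).toNat : ℕ) * (-(1/(N:ℝ)))) := by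
        funext y
        congr 1
        have hc : (((-k).toNat : ℕ) : ℝ) = -(k : ℝ) := by
          have := Int.toNat_of_nonneg (by omega : (0:ℤ) ≤ -k)
          exact_mod_cast congrArg (fun z : ℤ => (z:ℝ)) this
        rw [hc]; ring
      rw [heq]; exact h3
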